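/- Approximate integer distance principle in the plane, hyperbola step: let a₀, a₁ ∈ ℝ² be distinct, c₁ > 0, and let A' be a set of points a with |a| → ∞ along A' such that |a - a₀| - |a - a₁| = c₁ k(a) + o(1) for integers k(a) as |a| → ∞. Then the values |a - a₀| - |a - a₁| take only finitely many limit points, each of the form c₁ k with |c₁ k| ≤ |a₀ - a₁|; hence all but finitely many points of A' lie within o(1) of finitely many hyperbolas (or lines) with foci a₀, a₁. -/
import Mathlib


open Filter

theorem hyperbola_step (a₀ a₁ : EuclideanSpace ℝ (Fin 2)) (hne : a₀ ≠ a₁)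
    (c₁ : ℝ) (hc₁ : 0 < c₁)
    (A' : Set (EuclideanSpace ℝ (Fin 2)))
    (ε : ℝ → ℝ) (hε : Tendsto ε atTop (nhds 0))
    (happrox : ∀ a ∈ A', ∃ k : ℤ,
      |(dist a a₀ - dist a a₁) - c₁ * (k : ℝ)| ≤ ε ‖a‖) :
    (∀ L : ℝ,
        (∀ δ > 0, ∀ R : ℝ, ∃ a ∈ A', R ≤ ‖a‖ ∧ |(dist a a₀ - dist a a₁) - L| < δ) →
        ∃ k : ℤ, L = c₁ * (k : ℝ) ∧ |L| ≤ dist a₀ a₁) ∧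
      {L : ℝ |
        ∀ δ > 0, ∀ R : ℝ, ∃ a ∈ A', R ≤ ‖a‖ ∧ |(dist a a₀ - dist a a₁) - L| < δ}.Finite := by
  have main : ∀ L : ℝ,
      (∀ δ > 0, ∀ R : ℝ, ∃ a ∈ A', R ≤ ‖a‖ ∧ |(dist a a₀ - dist a a₁) - L| < δ) →
      ∃ k : ℤ, L = c₁ * (k : ℝ) ∧ |L| ≤ dist a₀ a₁ := by
    intro L hL
    -- |L| ≤ dist a₀ a₁
    have hbound : |L| ≤ dist a₀ a₁ := by
      refine le_of_forall_pos_le_add (fun δ hδ => ?_)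
      obtain ⟨a, haA, -, hclose⟩ := hL δ hδ 0
      have htri : |dist a a₀ - dist a a₁| ≤ dist a₀ a₁ := by
        have := abs_dist_sub_le a₀ a₁ a
        simpa [dist_comm] using this
      calc |L| ≤ |dist a a₀ - dist a a₁| + |(dist a a₀ - dist a a₁) - L| := by
              have := abs_sub_abs_le_abs_sub L (dist a a₀ - dist a a₁)
              have h2 : |L - (dist a a₀ - dist a a₁)| = |(dist a a₀ - dist a a₁) - L| :=
                abs_sub_comm _ _
              nlinarith [abs_sub_abs_le_abs_sub L (dist a a₀ - dist a a₁),
                abs_nonneg ((dist a a₀ - dist a a₁) - L)]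
        _ ≤ dist a₀ a₁ + δ := add_le_add htri hclose.le
    -- key: L is arbitrarily close to c₁ * ℤ
    have key : ∀ η > (0:ℝ), ∃ k : ℤ, |L - c₁ * k| < η := by
      intro η hη
      rw [Metric.tendsto_atTop] at hε
      obtain ⟨R, hR⟩ := hε (η / 2) (by linarith)
      obtain ⟨a, haA, hRa, hclose⟩ := hL (η / 2) (by linarith) R
      obtain ⟨k, hk⟩ := happrox a haA
      refine ⟨k, ?_⟩
      have hεa : |ε ‖a‖| < η / 2 := by simpa [Real.dist_eq] using hR ‖a‖ hRa
      calc |L - c₁ * k| ≤ |L - (dist a a₀ - dist a a₁)| +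
              |(dist a a₀ - dist a a₁) - c₁ * k| := by
              have := abs_sub_le L (dist a a₀ - dist a a₁) (c₁ * k)
              exact this
        _ < η / 2 + η / 2 := by
              have h1 : |L - (dist a a₀ - dist a a₁)| < η / 2 := by
                rw [abs_sub_comm]; exact hclose
              have h2 : |(dist a a₀ - dist a a₁) - c₁ * k| < η / 2 :=
                hk.trans_lt ((le_abs_self _).trans_lt hεa)
              linarith
        _ = η := by ring
    -- conclude L = c₁ * round (L / c₁)
    refine ⟨round (L / c₁), ?_, hbound⟩
    by_contra h
    have hη : 0 < |L - c₁ * round (L / c₁)| := abs_pos.mpr (sub_ne_zero.mpr h)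
    obtain ⟨k, hk⟩ := key _ hη
    have hmin : |L - c₁ * round (L / c₁)| ≤ |L - c₁ * k| := by
      have := round_le (L / c₁) k
      have h1 : |L / c₁ - round (L / c₁)| * c₁ ≤ |L / c₁ - k| * c₁ :=
        mul_le_mul_of_nonneg_right this hc₁.le
      have e1 : ∀ z : ℤ, |L / c₁ - z| * c₁ = |L - c₁ * z| := by
        intro z
        rw [← abs_of_pos hc₁, ← abs_mul, abs_of_pos hc₁]
        congr 1
        field_simp
      rwa [e1, e1] at h1
    exact absurd (hmin.trans_lt hk) (lt_irrefl _)
  refine ⟨main, ?_⟩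
  set D := dist a₀ a₁
  have hsub : {L : ℝ |
      ∀ δ > 0, ∀ R : ℝ, ∃ a ∈ A', R ≤ ‖a‖ ∧ |(dist a a₀ - dist a a₁) - L| < δ} ⊆
      (fun k : ℤ => c₁ * (k : ℝ)) '' (Set.Icc (-⌈D / c₁⌉) ⌈D / c₁⌉) := by
    intro L hL
    obtain ⟨k, hkL, hkb⟩ := main L hL
    refine ⟨k, ?_, hkL.symm⟩
    have hk : |(k : ℝ)| ≤ D / c₁ := by
      rw [le_div_iff₀ hc₁]
      calc |(k : ℝ)| * c₁ = |c₁ * k| := by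
            rw [abs_mul, abs_of_pos hc₁]; ring
        _ ≤ D := hkL ▸ hkb
    have hceil : |(k : ℝ)| ≤ (⌈D / c₁⌉ : ℝ) := hk.trans (Int.le_ceil _)
    have : |k| ≤ ⌈D / c₁⌉ := by exact_mod_cast (by simpa using hceil : |((k : ℤ) : ℝ)| ≤ ((⌈D / c₁⌉ : ℤ) : ℝ))
    rw [abs_le] at this
    exact ⟨this.1, this.2⟩
  exact ((Set.finite_Icc _ _).image _).subset hsub
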